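/- For rule 218 with central cell 0, distinct words in the same set S_{2k+1} index different rows: for every n and every k ≥ 1 with 2k+1 ≤ n, if x, x̃ ∈ S_{2k+1} and x ≠ x̃, then there exists y ∈ {0,1}^n such that f^n(x·0·y) ≠ f^n(x̃·0·y). -/

import Mathlib

/-- The local rule of elementary cellular automaton 218. -/
def rule218 : Bool → Bool → Bool → Bool
  | true,  true,  true  => true
  | true,  true,  false => true
  | true,  false, true  => false
  | true,  false, false => true
  | false, true,  true  => true
  | false, true,  false => false
  | false, false, true  => true
  | false, false, false => false

/-- One synchronous step of rule 218 on a finite word (sliding window of width 3). -/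
def step218 : List Bool → List Bool
  | a :: b :: c :: l => rule218 a b c :: step218 (b :: c :: l)
  | _ => []

/-- The `n`-th iterated local rule of rule 218. -/
def iter218 (n : ℕ) (z : List Bool) : Bool := (step218^[n] z).headD false

/-- The set `S_{2k+1} = {1^{n-2k-1} 0^{2k+1}} ∪
`{1^{n-2k-1} 0^a 1 0^b : a, b odd, b ≥ 3, a + b = 2k}` of words of length `n`
(written `x_n … x_1` left to right). -/
def S218 (n k : ℕ) : Set (List Bool) :=
  {List.replicate (n - (2 * k + 1)) true ++ List.replicate (2 * k + 1) false} ∪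
  { w | ∃ a b : ℕ, a % 2 = 1 ∧ b % 2 = 1 ∧ 3 ≤ b ∧ a + b = 2 * k ∧
      w = List.replicate (n - (2 * k + 1)) true ++ List.replicate a false ++ [true] ++
        List.replicate b false }

/-! ### Basic lemmas about `step218` -/

lemma step218_cons (a b c : Bool) (l : List Bool) :
    step218 (a :: b :: c :: l) = rule218 a b c :: step218 (b :: c :: l) := rfl

lemma step218_length : ∀ w : List Bool, (step218 w).length = w.length - 2
  | [] => rfl
  | [_] => rfl
  | [_, _] => rfl
  | a :: b :: c :: l => by
      rw [step218_cons]
      simp [step218_length (b :: c :: l)]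

lemma step218_append_left : ∀ (u w : List Bool), 2 ≤ w.length →
    ∃ u', u'.length = u.length ∧ step218 (u ++ w) = u' ++ step218 w
  | [], w, _ => ⟨[], rfl, rfl⟩
  | a :: u1, w, h => by
    obtain ⟨u', h1, h2⟩ := step218_append_left u1 w h
    rcases e : u1 ++ w with _ | ⟨b, _ | ⟨c, l⟩⟩
    · exfalso
      have := congrArg List.length e
      simp only [List.length_append, List.length_nil, List.length_cons] at this
      omega
    · exfalso
      have := congrArg List.length e
      simp only [List.length_append, List.length_nil, List.length_cons] at this
      omega
    · refine ⟨rule218 a b c :: u', by simp [h1], ?_⟩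
      have : (a :: u1) ++ w = a :: b :: c :: l := by simp [e]
      rw [this, step218_cons, ← e, h2]
      simp

lemma step218_append_right : ∀ (z v : List Bool), 2 ≤ z.length →
    ∃ v', v'.length = v.length ∧ step218 (z ++ v) = step218 z ++ v'
  | [], _, h => by simp at h
  | [_], _, h => by simp at h
  | [a, b], v, _ => by
    refine ⟨step218 (a :: b :: v), ?_, ?_⟩
    · rw [step218_length]; simp
    · simp [step218]
  | a :: b :: c :: l, v, _ => by
    obtain ⟨v', h1, h2⟩ := step218_append_right (b :: c :: l) v (by simp)
    refine ⟨v', h1, ?_⟩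
    have : (a :: b :: c :: l) ++ v = a :: b :: c :: (l ++ v) := by simp
    rw [this, step218_cons, step218_cons]
    rw [show b :: c :: (l ++ v) = (b :: c :: l) ++ v by simp, h2]
    simp

lemma step218_mid (u z v : List Bool) (h : 2 ≤ z.length) :
    ∃ u' v', u'.length = u.length ∧ v'.length = v.length ∧
      step218 (u ++ z ++ v) = u' ++ step218 z ++ v' := by
  obtain ⟨v', hv, h2⟩ := step218_append_right z v h
  obtain ⟨u', hu, h1⟩ := step218_append_left u (z ++ v) (by simp; omega)
  refine ⟨u', v', hu, hv, ?_⟩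
  rw [List.append_assoc, h1, h2, List.append_assoc]

lemma step218_iter_mid : ∀ (t : ℕ) (u z v : List Bool), 2 * t + 2 ≤ z.length →
    ∃ u' v', u'.length = u.length ∧ v'.length = v.length ∧
      step218^[t] (u ++ z ++ v) = u' ++ step218^[t] z ++ v'
  | 0, u, z, v, _ => ⟨u, v, rfl, rfl, by simp⟩
  | t + 1, u, z, v, h => by
    obtain ⟨u1, v1, hu1, hv1, h1⟩ := step218_mid u z v (by omega)
    obtain ⟨u2, v2, hu2, hv2, h2⟩ := step218_iter_mid t u1 (step218 z) v1
      (by rw [step218_length]; omega)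
    refine ⟨u2, v2, by omega, by omega, ?_⟩
    rw [Function.iterate_succ_apply, Function.iterate_succ_apply, h1, h2]

lemma iter218_add (s t : ℕ) (w : List Bool) :
    iter218 (s + t) w = iter218 s (step218^[t] w) := by
  simp [iter218, Function.iterate_add_apply]

lemma iter218_succ (s : ℕ) (w : List Bool) :
    iter218 (s + 1) w = iter218 s (step218 w) := by
  simp [iter218, Function.iterate_succ_apply]

/-! ### Persistence lemmas -/

/-- A centered defect `1 1 0 1 1` forces output `false`. -/
lemma persist_defect : ∀ (j : ℕ) (u v : List Bool), u.length = j → v.length = j →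
    iter218 (j + 2) (u ++ [true, true, false, true, true] ++ v) = false
  | 0, u, v, hu, hv => by
    rw [List.length_eq_zero_iff] at hu hv
    subst hu; subst hv
    decide
  | j + 1, u, v, hu, hv => by
    rcases u.eq_nil_or_concat with rfl | ⟨u0, a, rfl⟩
    · simp at hu
    rcases v with _ | ⟨b, v0⟩
    · simp at hv
    simp only [List.concat_eq_append] at hu ⊢
    have hw : (u0 ++ [a]) ++ [true, true, false, true, true] ++ (b :: v0) =
        u0 ++ ([a, true, true, false, true, true, b]) ++ v0 := by simp
    have hz : step218 [a, true, true, false, true, true, b] =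
        [true, true, false, true, true] := by cases a <;> cases b <;> rfl
    obtain ⟨u', v', hu', hv', h⟩ :=
      step218_mid u0 [a, true, true, false, true, true, b] v0 (by simp)
    rw [hw, show j + 1 + 2 = (j + 2) + 1 by ring, iter218_succ, h, hz]
    have hu0 : u0.length = j := by simp at hu; omega
    have hv0 : v0.length = j := by simp at hv; omega
    exact persist_defect j u' v' (by omega) (by omega)

/-- A centered pair `1 1` (center the left cell) forces output `true`. -/
lemma persist_pair : ∀ (j : ℕ) (u v : List Bool), u.length = j + 1 → v.length = j →
    iter218 (j + 1) (u ++ [true, true] ++ v) = true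
  | 0, u, v, hu, hv => by
    rw [List.length_eq_one_iff] at hu
    obtain ⟨a, rfl⟩ := hu
    rw [List.length_eq_zero_iff] at hv; subst hv
    cases a <;> decide
  | j + 1, u, v, hu, hv => by
    rcases u.eq_nil_or_concat with rfl | ⟨u0, a, rfl⟩
    · simp at hu
    rcases v with _ | ⟨b, v0⟩
    · simp at hv
    simp only [List.concat_eq_append] at hu ⊢
    have hw : (u0 ++ [a]) ++ [true, true] ++ (b :: v0) =
        u0 ++ ([a, true, true, b]) ++ v0 := by simp
    have hz : step218 [a, true, true, b] = [true, true] := by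
      cases a <;> cases b <;> rfl
    obtain ⟨u', v', hu', hv', h⟩ := step218_mid u0 [a, true, true, b] v0 (by simp)
    rw [hw, show j + 1 + 1 = (j + 1) + 1 by ring, iter218_succ, h, hz]
    have hu0 : u0.length = j + 1 := by simp at hu; omega
    have hv0 : v0.length = j := by simp at hv; omega
    exact persist_pair j u' v' (by omega) (by omega)

/-! ### Evolution of the structured middle words -/

lemma zeros_step (g : ℕ) (w : List Bool) :
    step218 (false :: false :: (List.replicate g false ++ w)) =
      List.replicate g false ++ step218 (false :: false :: w) := by
  induction g with
  | zero => simp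
  | succ g ih =>
    rw [List.replicate_succ, List.cons_append, step218_cons, ih]
    simp [rule218, List.replicate_succ]

lemma rep_expand (g : ℕ) (w : List Bool) :
    List.replicate (g + 2) false ++ w = false :: false :: (List.replicate g false ++ w) := by
  simp [List.replicate_succ]

lemma Astep1 (g : ℕ) :
    step218 ([true] ++ List.replicate (g + 2) false ++ [true, false, true, true]) =
      [true] ++ List.replicate g false ++ [true, false, false, true] := by
  rw [List.singleton_append, List.cons_append, rep_expand, step218_cons, zeros_step]
  rfl

lemma Astep2 (g : ℕ) :
    step218 ([true] ++ List.replicate (g + 2) false ++ [true, false, false, true]) =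
      [true] ++ List.replicate g false ++ [true, false, true, true] := by
  rw [List.singleton_append, List.cons_append, rep_expand, step218_cons, zeros_step]
  rfl

lemma Acore : ∀ d : ℕ,
    step218^[2 * d + 2] ([true] ++ List.replicate (4 * d + 4) false ++ [true, false, true, true]) =
      [true, true, false, true, true]
  | 0 => by decide
  | d + 1 => by
    rw [show 2 * (d + 1) + 2 = (2 * d + 2) + 1 + 1 by ring,
      Function.iterate_succ_apply, Function.iterate_succ_apply]
    rw [show 4 * (d + 1) + 4 = (4 * d + 6) + 2 by ring, Astep1,
      show 4 * d + 6 = (4 * d + 4) + 2 by ring, Astep2]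
    exact Acore d

lemma Bstep1 (g : ℕ) :
    step218 (List.replicate (g + 2) false ++ [true, false, true, true, false]) =
      List.replicate g false ++ [true, false, false, true, true] := by
  rw [rep_expand, zeros_step]; rfl

lemma Bstep2 (g : ℕ) :
    step218 (List.replicate (g + 2) false ++ [true, false, false, true, true]) =
      List.replicate g false ++ [true, false, true, true, true] := by
  rw [rep_expand, zeros_step]; rfl

lemma Bstep3 (g : ℕ) :
    step218 (List.replicate (g + 2) false ++ [true, false, true, true, true]) =
      List.replicate g false ++ [true, false, false, true, true] := by
  rw [rep_expand, zeros_step]; rfl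

lemma Pcore : ∀ j : ℕ, ∃ q : Bool,
    step218^[j + 1] (List.replicate (2 * j) false ++ [true, false, false, true, true]) =
      [q, true, true]
  | 0 => ⟨true, by decide⟩
  | 1 => ⟨false, by decide⟩
  | j + 2 => by
    obtain ⟨q, hq⟩ := Pcore j
    refine ⟨q, ?_⟩
    rw [show j + 2 + 1 = (j + 1) + 1 + 1 by ring,
      Function.iterate_succ_apply, Function.iterate_succ_apply]
    rw [show 2 * (j + 2) = (2 * j + 2) + 2 by ring, Bstep2,
      show 2 * j + 2 = 2 * j + 2 from rfl, Bstep3]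
    exact hq

lemma Bcore (c : ℕ) : ∃ q : Bool,
    step218^[c + 3] (List.replicate (2 * c + 4) false ++ [true, false, true, true, false]) =
      [q, true, true] := by
  obtain ⟨q, hq⟩ := Pcore (c + 1)
  refine ⟨q, ?_⟩
  rw [show c + 3 = (c + 2) + 1 by ring, Function.iterate_succ_apply,
    show 2 * c + 4 = (2 * c + 2) + 2 by ring, Bstep1]
  rw [show 2 * c + 2 = 2 * (c + 1) by ring, show c + 2 = (c + 1) + 1 by ring] at *
  exact hq

/-! ### The two evaluation lemmas -/

lemma valA (d j : ℕ) (u v : List Bool) (hu : u.length = j) (hv : v.length = j) :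
    iter218 (j + 2 * d + 4)
      (u ++ ([true] ++ List.replicate (4 * d + 4) false ++ [true, false, true, true]) ++ v) =
      false := by
  obtain ⟨u', v', hu', hv', h⟩ := step218_iter_mid (2 * d + 2) u
    ([true] ++ List.replicate (4 * d + 4) false ++ [true, false, true, true]) v
    (by simp; omega)
  rw [show j + 2 * d + 4 = (j + 2) + (2 * d + 2) by ring, iter218_add, h, Acore d]
  exact persist_defect j u' v' (by omega) (by omega)

lemma valB (c j : ℕ) (u v : List Bool) (hu : u.length = j) (hv : v.length = j) :
    iter218 (j + c + 4)
      (u ++ (List.replicate (2 * c + 4) false ++ [true, false, true, true, false]) ++ v) =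
      true := by
  obtain ⟨q, hq⟩ := Bcore c
  obtain ⟨u', v', hu', hv', h⟩ := step218_iter_mid (c + 3) u
    (List.replicate (2 * c + 4) false ++ [true, false, true, true, false]) v
    (by simp; omega)
  rw [show j + c + 4 = (j + 1) + (c + 3) by ring, iter218_add, h, hq]
  rw [show u' ++ [q, true, true] ++ v' = (u' ++ [q]) ++ [true, true] ++ v' by simp]
  exact persist_pair j (u' ++ [q]) v' (by simp; omega) (by omega)

/-! ### Replicate bookkeeping -/

lemma rep_merge (p q : ℕ) (T : List Bool) :
    List.replicate p false ++ false :: (List.replicate q false ++ T) =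
      List.replicate (p + q + 1) false ++ T := by
  rw [show p + q + 1 = p + (q + 1) by ring, List.replicate_add, List.replicate_succ]
  simp

lemma rep_split (p q : ℕ) (T : List Bool) :
    List.replicate (p + q) false ++ T =
      List.replicate p false ++ (List.replicate q false ++ T) := by
  rw [List.replicate_add, List.append_assoc]

/-- The distinguishing word `y` for parameter `b`. -/
def Yw (n b : ℕ) : List Bool :=
  List.replicate (b - 3) false ++ [true, false, true, true] ++
    List.replicate (n - b - 1) false

/-! ### The three evaluations on actual rows -/

section rows
variable (n k : ℕ)

lemma Yw_length (n b : ℕ) (hb : 3 ≤ b) (hbn : b + 2 ≤ n) : (Yw n b).length = n := by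
  simp [Yw]; omega

/-- The special row with trailing-zero block `b` evaluates to `false` on `Yw n b`. -/
lemma rowA (n k a b : ℕ) (ha : 1 ≤ a) (hb3 : 3 ≤ b) (hb2 : b % 2 = 1)
    (hab : a + b = 2 * k) (hkn : 2 * k + 1 ≤ n) :
    iter218 n ((List.replicate (n - (2 * k + 1)) true ++ List.replicate a false ++ [true] ++
      List.replicate b false) ++ false :: Yw n b) = false := by
  obtain ⟨d, rfl⟩ : ∃ d, b = 2 * d + 3 := ⟨(b - 3) / 2, by omega⟩
  obtain ⟨m, hm⟩ : ∃ m, n - (2 * k + 1) = m := ⟨_, rfl⟩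
  have hmn : m + 2 * k + 1 = n := by omega
  obtain ⟨w, hw⟩ : ∃ w, n - (2 * d + 3) - 1 = w + 1 := ⟨n - (2 * d + 3) - 2, by omega⟩
  rw [hm, Yw, hw, show (2 * d + 3) - 3 = 2 * d by omega]
  have heq : (List.replicate m true ++ List.replicate a false ++ [true] ++
        List.replicate (2 * d + 3) false) ++ false ::
        (List.replicate (2 * d) false ++ [true, false, true, true] ++
          List.replicate (w + 1) false) =
      (List.replicate m true ++ List.replicate a false) ++
        ([true] ++ List.replicate (4 * d + 4) false ++ [true, false, true, true]) ++
        List.replicate (w + 1) false := by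
    simp only [List.append_assoc, List.cons_append, List.singleton_append, List.nil_append]
    rw [rep_merge, show 2 * d + 3 + 2 * d + 1 = 4 * d + 4 by ring]
  rw [heq]
  have hj : n = (m + a) + 2 * d + 4 := by omega
  rw [hj]
  exact valA d (m + a) _ _ (by simp) (by simp; omega)

/-- The row `1^m 0^{2k+1}` evaluates to `true` on `Yw n b` (for special `b`). -/
lemma rowB1 (n k a b : ℕ) (ha : 1 ≤ a) (hb3 : 3 ≤ b) (hb2 : b % 2 = 1) (hab : a + b = 2 * k)
    (hkn : 2 * k + 1 ≤ n) :
    iter218 n ((List.replicate (n - (2 * k + 1)) true ++ List.replicate (2 * k + 1) false) ++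
      false :: Yw n b) = true := by
  obtain ⟨d, rfl⟩ : ∃ d, b = 2 * d + 3 := ⟨(b - 3) / 2, by omega⟩
  obtain ⟨m, hm⟩ : ∃ m, n - (2 * k + 1) = m := ⟨_, rfl⟩
  have hmn : m + 2 * k + 1 = n := by omega
  obtain ⟨w, hw⟩ : ∃ w, n - (2 * d + 3) - 1 = w + 1 := ⟨n - (2 * d + 3) - 2, by omega⟩
  obtain ⟨a0, rfl⟩ : ∃ a0, a = a0 + 1 := ⟨a - 1, by omega⟩
  rw [hm, Yw, hw, show (2 * d + 3) - 3 = 2 * d by omega]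
  have heq : (List.replicate m true ++ List.replicate (2 * k + 1) false) ++ false ::
        (List.replicate (2 * d) false ++ [true, false, true, true] ++
          List.replicate (w + 1) false) =
      (List.replicate m true ++ List.replicate a0 false) ++
        (List.replicate (2 * (2 * d + 1) + 4) false ++ [true, false, true, true, false]) ++
        List.replicate w false := by
    simp only [List.append_assoc, List.cons_append, List.singleton_append, List.nil_append]
    rw [rep_merge, show 2 * k + 1 + 2 * d + 1 = a0 + (2 * (2 * d + 1) + 4) by omega,
      rep_split]
    simp [List.replicate_succ]
  rw [heq]
  have hj : n = (m + a0) + (2 * d + 1) + 4 := by omega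
  rw [hj]
  exact valB (2 * d + 1) (m + a0) _ _ (by simp) (by simp; omega)

/-- A special row with larger trailing-zero block `b'` evaluates to `true` on `Yw n b`. -/
lemma rowB2 (n k a b a' b' : ℕ) (ha : 1 ≤ a) (hb3 : 3 ≤ b) (hb2 : b % 2 = 1) (hab : a + b = 2 * k)
    (hab' : a' + b' = 2 * k) (hbb : b + 2 ≤ b') (hkn : 2 * k + 1 ≤ n) :
    iter218 n ((List.replicate (n - (2 * k + 1)) true ++ List.replicate a' false ++ [true] ++
      List.replicate b' false) ++ false :: Yw n b) = true := by
  obtain ⟨d, rfl⟩ : ∃ d, b = 2 * d + 3 := ⟨(b - 3) / 2, by omega⟩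
  obtain ⟨m, hm⟩ : ∃ m, n - (2 * k + 1) = m := ⟨_, rfl⟩
  have hmn : m + 2 * k + 1 = n := by omega
  obtain ⟨w, hw⟩ : ∃ w, n - (2 * d + 3) - 1 = w + 1 := ⟨n - (2 * d + 3) - 2, by omega⟩
  obtain ⟨g, rfl⟩ : ∃ g, b' = (2 * d + 3) + 2 + g := ⟨b' - (2 * d + 3) - 2, by omega⟩
  rw [hm, Yw, hw, show (2 * d + 3) - 3 = 2 * d by omega]
  have heq : (List.replicate m true ++ List.replicate a' false ++ [true] ++
        List.replicate ((2 * d + 3) + 2 + g) false) ++ false ::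
        (List.replicate (2 * d) false ++ [true, false, true, true] ++
          List.replicate (w + 1) false) =
      (List.replicate m true ++ List.replicate a' false ++ [true] ++ List.replicate g false) ++
        (List.replicate (2 * (2 * d + 1) + 4) false ++ [true, false, true, true, false]) ++
        List.replicate w false := by
    simp only [List.append_assoc, List.cons_append, List.singleton_append, List.nil_append]
    rw [rep_merge, show (2 * d + 3) + 2 + g + 2 * d + 1 = g + (2 * (2 * d + 1) + 4) by omega,
      rep_split]
    simp [List.replicate_succ]
  rw [heq]
  have hj : n = (m + a' + 1 + g) + (2 * d + 1) + 4 := by omega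
  rw [hj]
  exact valB (2 * d + 1) (m + a' + 1 + g) _ _ (by simp; omega) (by simp; omega)

end rows

/-- For rule 218 with central cell 0, distinct words in the same set `S_{2k+1}`
index different rows of the matrix `(x,y) ↦ fⁿ(x·0·y)`. -/
theorem rule218_rows_distinct_within_level (n k : ℕ)
    (hk : 1 ≤ k) (hkn : 2 * k + 1 ≤ n)
    (x xt : List Bool) (hx : x ∈ S218 n k) (hxt : xt ∈ S218 n k) (hne : x ≠ xt) :
    ∃ y : List Bool, y.length = n ∧
      iter218 n (x ++ false :: y) ≠ iter218 n (xt ++ false :: y) := by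
  rw [S218, Set.mem_union, Set.mem_singleton_iff, Set.mem_setOf_eq] at hx hxt
  rcases hx with hx0 | ⟨a, b, ha2, hb2, hb3, hab, rfl⟩ <;>
    rcases hxt with hxt0 | ⟨a', b', ha2', hb2', hb3', hab', rfl⟩
  · exact absurd (hx0.trans hxt0.symm) hne
  · -- x is the all-zero-tail row, xt is special with parameter b'
    have ha' : 1 ≤ a' := by omega
    have hbn : b' + 2 ≤ n := by omega
    refine ⟨Yw n b', Yw_length n b' hb3' hbn, ?_⟩
    rw [hx0, rowA n k a' b' ha' hb3' hb2' hab' hkn,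
      rowB1 n k a' b' ha' hb3' hb2' hab' hkn]
    simp
  · -- x special with parameter b, xt the all-zero-tail row
    have ha : 1 ≤ a := by omega
    have hbn : b + 2 ≤ n := by omega
    refine ⟨Yw n b, Yw_length n b hb3 hbn, ?_⟩
    rw [hxt0, rowA n k a b ha hb3 hb2 hab hkn,
      rowB1 n k a b ha hb3 hb2 hab hkn]
    simp
  · -- both special
    have ha : 1 ≤ a := by omega
    have ha' : 1 ≤ a' := by omega
    have hbb' : b ≠ b' := by
      intro h
      apply hne
      subst h
      have : a = a' := by omega
      subst this
      rfl
    rcases Nat.lt_or_ge b b' with hlt | hge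
    · have hstep : b + 2 ≤ b' := by omega
      have hbn : b + 2 ≤ n := by omega
      refine ⟨Yw n b, Yw_length n b hb3 hbn, ?_⟩
      rw [rowA n k a b ha hb3 hb2 hab hkn,
        rowB2 n k a b a' b' ha hb3 hb2 hab hab' hstep hkn]
      simp
    · have hlt' : b' < b := by omega
      have hstep : b' + 2 ≤ b := by omega
      have hbn : b' + 2 ≤ n := by omega
      refine ⟨Yw n b', Yw_length n b' hb3' hbn, ?_⟩
      rw [rowA n k a' b' ha' hb3' hb2' hab' hkn,
        rowB2 n k a' b' a b ha' hb3' hb2' hab' hab hstep hkn]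
      simp
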